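/- arXiv:1407.5900 — 2 statements merged into one kernel-verified Lean document; each statement's English description precedes it below -/
import Mathlib

section
/- Let R be a commutative unital ring and A an unbounded cochain complex of R-modules. If A is cofibrant, i.e. the unique map 0 → A has the left lifting property with respect to every degreewise surjective quasi-isomorphism of cochain complexes of R-modules, then A^n is a projective R-module for every n ∈ ℤ. -/
open CategoryTheory Limits ZeroObject

noncomputable section

variable (R : Type) [CommRing R]

/-- The category of unbounded cochain complexes of `R`-modules. -/
abbrev Cx := CochainComplex (ModuleCat.{0} R) ℤ

/-- The underlying module of `D_R(n)` in degree `i`: it is (isomorphic to) `R` if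
`i = n` or `i = n+1`, and the zero module otherwise. -/
abbrev diskFun (n i : ℤ) : Type := PLift (i = n ∨ i = n + 1) → R

/-- The differential of the disk complex `D_R(n)`. -/
def diskD (n i j : ℤ) : (diskFun R n i) →ₗ[R] (diskFun R n j) where
  toFun f _ := if hij : i = n ∧ j = n + 1 then f ⟨Or.inl hij.1⟩ else 0
  map_add' f g := by
    funext h
    by_cases hij : i = n ∧ j = n + 1 <;> simp [hij]
  map_smul' r f := by
    funext h
    by_cases hij : i = n ∧ j = n + 1 <;> simp [hij]

lemma diskD_apply (n i j : ℤ) (f : diskFun R n i) (h : PLift (j = n ∨ j = n + 1)) :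
    diskD R n i j f h = if hij : i = n ∧ j = n + 1 then f ⟨Or.inl hij.1⟩ else 0 := rfl

/-- The disk complex `D_R(n)`, with `R` in degrees `n` and `n+1`, the identity as the only
non-trivial differential, and `0` elsewhere. -/
def disk (n : ℤ) : Cx R where
  X i := ModuleCat.of R (diskFun R n i)
  d i j := ModuleCat.ofHom (diskD R n i j)
  shape i j hij := by
    apply ModuleCat.hom_ext
    apply LinearMap.ext
    intro f
    funext h
    have hn : ¬ (i = n ∧ j = n + 1) := by
      rintro ⟨rfl, rfl⟩
      exact hij rfl
    show diskD R n i j f h = _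
    rw [diskD_apply, dif_neg hn]
    rfl
  d_comp_d' i j k _ _ := by
    apply ModuleCat.hom_ext
    apply LinearMap.ext
    intro f
    funext h
    show diskD R n j k (diskD R n i j f) h = _
    rw [diskD_apply]
    split_ifs with hjk
    · rw [diskD_apply]
      have hn : ¬ (i = n ∧ j = n + 1) := by
        obtain ⟨h1, h2⟩ := hjk
        rintro ⟨rfl, h3⟩
        omega
      rw [dif_neg hn]
      rfl
    · rfl

/-- The underlying module of `S_R(n)` in degree `i`. -/
abbrev sphereFun (n i : ℤ) : Type := PLift (i = n) → R

/-- The sphere complex `S_R(n)`, with `R` in degree `n` and `0` elsewhere. -/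
def sphere (n : ℤ) : Cx R where
  X i := ModuleCat.of R (sphereFun R n i)
  d _ _ := 0
  shape _ _ _ := rfl
  d_comp_d' := by intros; simp

/-- The degreewise component of the map `S_R(n+1) ⟶ D_R(n)`. -/
def sphereToDiskHom (n i : ℤ) : (sphereFun R (n + 1) i) →ₗ[R] (diskFun R n i) where
  toFun g _ := if hi : i = n + 1 then g ⟨hi⟩ else 0
  map_add' g₁ g₂ := by
    funext h
    by_cases hi : i = n + 1 <;> simp [hi]
  map_smul' r g := by
    funext h
    by_cases hi : i = n + 1 <;> simp [hi]

lemma sphereToDiskHom_apply (n i : ℤ) (g : sphereFun R (n + 1) i)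
    (h : PLift (i = n ∨ i = n + 1)) :
    sphereToDiskHom R n i g h = if hi : i = n + 1 then g ⟨hi⟩ else 0 := rfl

/-- The map `S_R(n+1) ⟶ D_R(n)` which is the identity of `R` in degree `n+1`. -/
def sphereToDisk (n : ℤ) : sphere R (n + 1) ⟶ disk R n where
  f i := ModuleCat.ofHom (sphereToDiskHom R n i)
  comm' i j _ := by
    apply ModuleCat.hom_ext
    apply LinearMap.ext
    intro (g : sphereFun R (n + 1) i)
    funext h
    show diskD R n i j (sphereToDiskHom R n i g) h = sphereToDiskHom R n j ((0 : _ →ₗ[R] _) g) h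
    simp only [LinearMap.zero_apply, map_zero, Pi.zero_apply]
    rw [diskD_apply]
    split_ifs with hij
    · rw [sphereToDiskHom_apply]
      have hn : ¬ i = n + 1 := by
        obtain ⟨h1, h2⟩ := hij
        omega
      rw [dif_neg hn]
    · rfl

/-- A map of cochain complexes is degreewise surjective if it is surjective in each degree. -/
def DegSurj {M N : Cx R} (p : M ⟶ N) : Prop := ∀ n : ℤ, Function.Surjective (p.f n)



/-- `f` is a retract of `g` in the arrow category: there are morphisms of arrows
`f → g → f` composing to the identity of `f`. -/
def IsRetractOf {C : Type 1} [Category.{0} C] {X Y X' Y' : C} (f : X ⟶ Y) (g : X' ⟶ Y') : Prop :=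
  ∃ (i : Arrow.mk f ⟶ Arrow.mk g) (r : Arrow.mk g ⟶ Arrow.mk f), i ≫ r = 𝟙 (Arrow.mk f)

/-- The generating trivial cofibration `0 ⟶ D_R(n)`. -/
def zeroToDisk (n : ℤ) : (0 : Cx R) ⟶ disk R n := 0

/-- A cochain complex `A` is cofibrant if `0 ⟶ A` has the left lifting property with respect
to every degreewise surjective quasi-isomorphism. -/
def Cofibrant (A : Cx R) : Prop :=
  ∀ {X Y : Cx R} (p : X ⟶ Y), (∀ n : ℤ, Function.Surjective (p.f n)) → QuasiIso p →
    HasLiftingProperty (0 : (0 : Cx R) ⟶ A) p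

/-- A morphism of cochain complexes is a cofibration (for the projective model structure) if it
has the left lifting property with respect to every degreewise surjective quasi-isomorphism. -/
def Cofib {M N : Cx R} (i : M ⟶ N) : Prop :=
  ∀ {X Y : Cx R} (p : X ⟶ Y), (∀ n : ℤ, Function.Surjective (p.f n)) → QuasiIso p →
    HasLiftingProperty i p


/-! ### Auxiliary constructions for the proof of `statement_3` -/

section AuxProof

variable (M : ModuleCat.{0} R)

/-- The underlying module of the disk complex on an arbitrary module `M`. -/
abbrev diskFunM (n i : ℤ) : Type := PLift (i = n ∨ i = n + 1) → M

/-- The differential of the disk complex on `M`. -/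
def diskDM (n i j : ℤ) : (diskFunM R M n i) →ₗ[R] (diskFunM R M n j) where
  toFun f _ := if hij : i = n ∧ j = n + 1 then f ⟨Or.inl hij.1⟩ else 0
  map_add' f g := by
    funext h
    by_cases hij : i = n ∧ j = n + 1 <;> simp [hij]
  map_smul' r f := by
    funext h
    by_cases hij : i = n ∧ j = n + 1 <;> simp [hij]

lemma diskDM_apply (n i j : ℤ) (f : diskFunM R M n i) (h : PLift (j = n ∨ j = n + 1)) :
    diskDM R M n i j f h = if hij : i = n ∧ j = n + 1 then f ⟨Or.inl hij.1⟩ else 0 := rfl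

/-- The disk complex on an arbitrary module `M`. -/
def diskM (n : ℤ) : Cx R where
  X i := ModuleCat.of R (diskFunM R M n i)
  d i j := ModuleCat.ofHom (diskDM R M n i j)
  shape i j hij := by
    apply ModuleCat.hom_ext
    apply LinearMap.ext
    intro f
    funext h
    have hn : ¬ (i = n ∧ j = n + 1) := by
      rintro ⟨rfl, rfl⟩
      exact hij rfl
    show diskDM R M n i j f h = _
    rw [diskDM_apply, dif_neg hn]
    rfl
  d_comp_d' i j k _ _ := by
    apply ModuleCat.hom_ext
    apply LinearMap.ext
    intro f
    funext h
    show diskDM R M n j k (diskDM R M n i j f) h = _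
    rw [diskDM_apply]
    split_ifs with hjk
    · rw [diskDM_apply]
      have hn : ¬ (i = n ∧ j = n + 1) := by
        obtain ⟨h1, h2⟩ := hjk
        rintro ⟨rfl, h3⟩
        omega
      rw [dif_neg hn]
      rfl
    · rfl

lemma diskM_exactAt (n i : ℤ) : (diskM R M n).ExactAt i := by
  rw [(diskM R M n).exactAt_iff' (i - 1) i (i + 1) (by simp) (by simp)]
  rw [ShortComplex.moduleCat_exact_iff]
  intro (x : diskFunM R M n i) hx
  by_cases hi : i = n
  · -- x is killed by the injective differential, so x = 0
    subst hi
    have h0 : diskDM R M i i (i + 1) x ⟨Or.inr rfl⟩ = 0 := congrFun hx ⟨Or.inr rfl⟩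
    rw [diskDM_apply, dif_pos ⟨rfl, rfl⟩] at h0
    refine ⟨0, ?_⟩
    rw [map_zero]
    funext h
    have : h = ⟨Or.inl rfl⟩ := Subsingleton.elim _ _
    rw [this]
    exact h0.symm
  · by_cases hi' : i = n + 1
    · refine ⟨(fun _ => x ⟨Or.inr hi'⟩ : diskFunM R M n (i - 1)), ?_⟩
      funext h
      show diskDM R M n (i - 1) i _ h = x h
      rw [diskDM_apply, dif_pos ⟨by omega, hi'⟩]
    · refine ⟨0, ?_⟩
      rw [map_zero]
      funext h
      exact absurd h.down (by rintro (rfl | rfl) <;> simp_all)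

/-- The map of disk complexes induced degreewise by a linear map. -/
def diskMapHom {M N : ModuleCat.{0} R} (q : M ⟶ N) (n i : ℤ) :
    (diskFunM R M n i) →ₗ[R] (diskFunM R N n i) where
  toFun f h := q (f h)
  map_add' f g := by funext h; simp
  map_smul' r f := by funext h; simp

/-- The map of disk complexes induced by a linear map. -/
def diskMap {M N : ModuleCat.{0} R} (q : M ⟶ N) (n : ℤ) : diskM R M n ⟶ diskM R N n where
  f i := ModuleCat.ofHom (diskMapHom R q n i)
  comm' i j _ := by
    apply ModuleCat.hom_ext
    apply LinearMap.ext
    intro (x : diskFunM R M n i)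
    funext h
    show diskDM R N n i j (diskMapHom R q n i x) h = diskMapHom R q n j (diskDM R M n i j x) h
    rw [diskDM_apply]
    show _ = q (diskDM R M n i j x h)
    rw [diskDM_apply]
    split_ifs with hij
    · rfl
    · rw [map_zero]

lemma diskMap_surjective {M N : ModuleCat.{0} R} (q : M ⟶ N) (hq : Function.Surjective q)
    (n i : ℤ) : Function.Surjective ((diskMap R q n).f i) := by
  intro t
  refine ⟨fun h => (hq (t h)).choose, ?_⟩
  funext h
  exact (hq (t h)).choose_spec

lemma diskMap_quasiIso {M N : ModuleCat.{0} R} (q : M ⟶ N) (n : ℤ) :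
    QuasiIso (diskMap R q n) := by
  refine ⟨fun i => ?_⟩
  rw [quasiIsoAt_iff_isIso_homologyMap]
  exact Limits.isIso_of_source_target_iso_zero _
    (((diskM R M n).exactAt_iff_isZero_homology i).1 (diskM_exactAt R M n i)).isoZero
    (((diskM R N n).exactAt_iff_isZero_homology i).1 (diskM_exactAt R N n i)).isoZero

/-- The degreewise component of the chain map `A ⟶ D(N)(n-1)` determined by a linear map
`g : A.X n ⟶ N`. -/
def toDiskHom (A : Cx R) {N : ModuleCat.{0} R} (n : ℤ) (g : A.X n →ₗ[R] N) (i : ℤ) :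
    A.X i →ₗ[R] (diskFunM R N (n - 1) i) where
  toFun x _ :=
    if hi : i + 1 = n then g ((A.XIsoOfEq hi).hom (A.d i (i + 1) x))
    else if hi' : i = n then g ((A.XIsoOfEq hi').hom x) else 0
  map_add' x y := by
    funext h
    split_ifs <;> simp
  map_smul' r x := by
    funext h
    split_ifs <;> simp

lemma toDiskHom_apply (A : Cx R) {N : ModuleCat.{0} R} (n : ℤ) (g : A.X n →ₗ[R] N) (i : ℤ)
    (x : A.X i) (h : PLift (i = n - 1 ∨ i = n - 1 + 1)) :
    toDiskHom R A n g i x h =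
      if hi : i + 1 = n then g ((A.XIsoOfEq hi).hom (A.d i (i + 1) x))
      else if hi' : i = n then g ((A.XIsoOfEq hi').hom x) else 0 := rfl

/-- The chain map `A ⟶ D(N)(n-1)` determined by a linear map `g : A.X n ⟶ N`. -/
def toDisk (A : Cx R) {N : ModuleCat.{0} R} (n : ℤ) (g : A.X n →ₗ[R] N) :
    A ⟶ diskM R N (n - 1) where
  f i := ModuleCat.ofHom (toDiskHom R A n g i)
  comm' i j hij := by
    obtain rfl : i + 1 = j := hij
    apply ModuleCat.hom_ext
    apply LinearMap.ext
    intro (x : A.X i)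
    funext h
    refine Eq.symm ?_
    show toDiskHom R A n g (i + 1) (A.d i (i + 1) x) h =
      diskDM R N (n - 1) i (i + 1) (toDiskHom R A n g i x) h
    rw [toDiskHom_apply, diskDM_apply]
    by_cases h1 : i + 1 + 1 = n
    · rw [dif_pos h1, dif_neg (by omega : ¬ (i = n - 1 ∧ i + 1 = n - 1 + 1))]
      have hdd : A.d (i + 1) (i + 1 + 1) (A.d i (i + 1) x) = 0 := by
        have h0 := congrArg (fun f => ModuleCat.Hom.hom f x) (A.d_comp_d i (i + 1) (i + 1 + 1))
        rw [ModuleCat.hom_comp, LinearMap.comp_apply, ModuleCat.hom_zero, LinearMap.zero_apply] at h0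
        exact h0
      rw [hdd, map_zero, map_zero]
    · rw [dif_neg h1]
      by_cases h2 : i + 1 = n
      · rw [dif_pos h2, dif_pos (⟨by omega, by omega⟩ : i = n - 1 ∧ i + 1 = n - 1 + 1)]
        rw [toDiskHom_apply, dif_pos h2]
      · rw [dif_neg h2, dif_neg (by omega : ¬ (i = n - 1 ∧ i + 1 = n - 1 + 1))]

end AuxProof

theorem statement_3 (A : Cx R) (hA : Cofibrant R A) : ∀ n : ℤ, Module.Projective R (A.X n) := by
  intro n
  rw [Module.projective_def]
  -- the free module surjecting onto `A.X n`
  set P : ModuleCat.{0} R := ModuleCat.of R (↑(A.X n) →₀ R) with hP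
  let q : P ⟶ A.X n := ModuleCat.ofHom (Finsupp.linearCombination R id)
  have hq : Function.Surjective q := fun x => ⟨Finsupp.single x 1, by
    show Finsupp.linearCombination R (id : ↑(A.X n) → ↑(A.X n)) (Finsupp.single x 1) = x
    rw [Finsupp.linearCombination_single, one_smul]
    rfl⟩
  -- the degreewise surjective quasi-isomorphism of disk complexes
  let phat : diskM R P (n - 1) ⟶ diskM R (A.X n) (n - 1) := diskMap R q (n - 1)
  have hsurj : ∀ i : ℤ, Function.Surjective (phat.f i) := diskMap_surjective R q hq (n - 1)
  have hquasi : QuasiIso phat := diskMap_quasiIso R q (n - 1)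
  have hlift : HasLiftingProperty (0 : (0 : Cx R) ⟶ A) phat := hA phat hsurj hquasi
  -- the commutative square
  have sq : CommSq (0 : (0 : Cx R) ⟶ diskM R P (n - 1)) (0 : (0 : Cx R) ⟶ A) phat
      (toDisk R A n LinearMap.id) := ⟨by simp⟩
  obtain ⟨⟨⟨l, -, hl⟩⟩⟩ := hlift.sq_hasLift sq
  -- extract the splitting from the lift
  let hOr : PLift ((n : ℤ) = n - 1 ∨ n = n - 1 + 1) := ⟨Or.inr (by omega)⟩
  refine ⟨LinearMap.comp (LinearMap.proj hOr) (l.f n).hom, ?_⟩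
  intro x
  have hcomp : ((l ≫ phat).f n) x = ((toDisk R A n LinearMap.id).f n) x := by rw [hl]
  have hval := congrFun hcomp hOr
  show Finsupp.linearCombination R id (l.f n x hOr) = x
  have hrhs : (toDisk R A n LinearMap.id).f n x hOr = x := by
    show toDiskHom R A n LinearMap.id n x hOr = x
    rw [toDiskHom_apply, dif_neg (by omega : ¬ (n : ℤ) + 1 = n), dif_pos rfl]
    simp [HomologicalComplex.XIsoOfEq]
  have hlhs : (l ≫ phat).f n x hOr = q (l.f n x hOr) := rfl
  rw [hrhs] at hval
  exact hval


end
end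

section
/- Let R be a commutative unital ring and i : M → N a morphism of unbounded cochain complexes of R-modules. Then i has the left lifting property with respect to every degreewise surjective cochain map if and only if i is degreewise injective and its cokernel coker(i) is a projective object of the category of cochain complexes of R-modules. Moreover, any such i is a quasi-isomorphism and has the left lifting property with respect to every degreewise surjective quasi-isomorphism. -/
open CategoryTheory Limits ZeroObject

noncomputable section

variable (R : Type) [CommRing R]

namespace Statement6Aux

open HomologicalComplex

variable {R : Type} [CommRing R]

lemma mono_of_inj {M N : Cx R} (i : M ⟶ N) (h : ∀ n, Function.Injective (i.f n)) :
    Mono i := by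
  refine ⟨fun {Z} u v huv => ?_⟩
  ext n : 1
  haveI : Mono (i.f n) := (ModuleCat.mono_iff_injective _).2 (h n)
  rw [← cancel_mono (i.f n)]
  simpa using congrArg (fun φ => HomologicalComplex.Hom.f φ n) huv

lemma epi_of_epi_f {X Y : Cx R} (p : X ⟶ Y) (h : ∀ n, Epi (p.f n)) :
    Epi p := by
  refine ⟨fun {Z} u v huv => ?_⟩
  ext n : 1
  haveI := h n
  rw [← cancel_epi (p.f n)]
  simpa using congrArg (fun φ => HomologicalComplex.Hom.f φ n) huv

lemma epi_of_surj {X Y : Cx R} (p : X ⟶ Y) (h : ∀ n, Function.Surjective (p.f n)) :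
    Epi p :=
  epi_of_epi_f p (fun n => (ModuleCat.epi_iff_surjective _).2 (h n))

/-- The contractible complex with `Q.X i = P.X (i-1) ⊞ P.X i`. -/
def Qc (P : Cx R) : Cx R where
  X i := P.X (i - 1) ⊞ P.X i
  d i j := if h : i + 1 = j then
      biprod.snd ≫ (P.XIsoOfEq (show i = j - 1 by omega)).hom ≫ biprod.inl else 0
  shape i j h := dif_neg h
  d_comp_d' i j k hij hjk := by
    obtain rfl : j = i + 1 := hij.symm
    obtain rfl : k = i + 1 + 1 := hjk.symm
    show (if h : _ then _ else _) ≫ (if h : _ then _ else _) = _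
    rw [dif_pos rfl, dif_pos rfl]
    simp

lemma Qc_d (P : Cx R) (i j : ℤ) (h : i + 1 = j) :
    (Qc P).d i j =
      biprod.snd ≫ (P.XIsoOfEq (show i = j - 1 by omega)).hom ≫ biprod.inl := by
  dsimp only [Qc]
  rw [dif_pos h]

/-- The canonical epimorphism `Qc P ⟶ P`. -/
def qP (P : Cx R) : Qc P ⟶ P where
  f i := biprod.desc (P.d (i - 1) i) (𝟙 _)
  comm' i j hij := by
    obtain rfl : j = i + 1 := hij.symm
    rw [Qc_d P i (i + 1) rfl]
    apply biprod.hom_ext' <;> dsimp only [Qc] <;> simp [XIsoOfEq_hom_comp_d]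

def QcHomotopy (P : Cx R) : Homotopy (𝟙 (Qc P)) 0 where
  hom i j := if h : j + 1 = i then
      biprod.fst ≫ (P.XIsoOfEq (show i - 1 = j by omega)).hom ≫ biprod.inr else 0
  zero i j h := dif_neg h
  comm i := by
    rw [dNext_eq _ (show (ComplexShape.up ℤ).Rel i (i+1) from rfl),
      prevD_eq _ (show (ComplexShape.up ℤ).Rel (i-1) i by simp)]
    rw [Qc_d P i (i+1) rfl, Qc_d P (i-1) i (by omega)]
    rw [dif_pos (show i + 1 = i + 1 from rfl), dif_pos (show i - 1 + 1 = i by omega)]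
    dsimp only [Qc, HomologicalComplex.id_f]
    show 𝟙 (P.X (i - 1) ⊞ P.X i) = _
    apply biprod.hom_ext' <;>
      simp [XIsoOfEq_hom_comp_XIsoOfEq_hom_assoc, XIsoOfEq_hom_comp_XIsoOfEq_hom,
        XIsoOfEq_rfl] <;>
      erw [add_zero, Preadditive.comp_add] <;> simp

lemma homologyMap_through_projective_eq_zero {P A B : Cx R} (hP : Projective P)
    (u : A ⟶ P) (v : P ⟶ B) (n : ℤ) :
    homologyMap (u ≫ v) n = 0 := by
  haveI : Epi (qP P) := epi_of_epi_f _ (fun n => by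
    haveI : IsSplitEpi ((qP P).f n) := ⟨⟨⟨biprod.inr, biprod.inr_desc _ _⟩⟩⟩
    infer_instance)
  obtain ⟨s, hs⟩ := hP.factors (𝟙 P) (qP P)
  have h0 : Homotopy (𝟙 P) (0 : P ⟶ P) :=
    ((Homotopy.ofEq (by rw [← hs]; simp)).trans
      (((QcHomotopy P).compRight (qP P)).compLeft s)).trans (Homotopy.ofEq (by simp))
  have h1 : Homotopy (u ≫ v) (0 : A ⟶ B) :=
    (Homotopy.ofEq (by simp)).trans
      (((h0.compRight v).compLeft u).trans (Homotopy.ofEq (by simp)))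
  rw [h1.homologyMap_eq, homologyMap_zero]

/-- An explicit zero complex. -/
def Zc (R : Type) [CommRing R] : Cx R where
  X _ := ModuleCat.of R PUnit
  d _ _ := 0

lemma exists_retraction {M N : Cx R} (i : M ⟶ N)
    (hLLP : ∀ {X Y : Cx R} (p : X ⟶ Y), (∀ n : ℤ, Function.Surjective (p.f n)) →
      HasLiftingProperty i p) :
    ∃ r : N ⟶ M, i ≫ r = 𝟙 M := by
  haveI : ∀ n : ℤ, Subsingleton ((Zc R).X n) := fun _ => inferInstanceAs (Subsingleton PUnit)
  have hz := hLLP (0 : M ⟶ Zc R) (fun n y => ⟨0, Subsingleton.elim _ _⟩)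
  have sq : CommSq (𝟙 M) i (0 : M ⟶ Zc R) 0 := ⟨by simp⟩
  obtain ⟨l⟩ := (hz.sq_hasLift sq).exists_lift
  exact ⟨l.l, l.fac_left⟩

lemma hasLift {M N : Cx R} (i : M ⟶ N) (hinj : ∀ n, Function.Injective (i.f n))
    (hproj : Projective (cokernel i)) {X Y : Cx R} (p : X ⟶ Y)
    (hp : ∀ n, Function.Surjective (p.f n)) : HasLiftingProperty i p := by
  haveI : Mono i := mono_of_inj i hinj
  haveI : Epi p := epi_of_surj p hp
  haveI := hproj
  obtain ⟨s, hs⟩ := hproj.factors (𝟙 (cokernel i)) (cokernel.π i)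
  have hw : (𝟙 N - cokernel.π i ≫ s) ≫ cokernel.π i = 0 := by
    simp only [Preadditive.sub_comp, Category.id_comp, Category.assoc, hs, Category.comp_id,
      sub_self]
  let r : N ⟶ M := Abelian.monoLift i _ hw
  have hr : r ≫ i = 𝟙 N - cokernel.π i ≫ s := Abelian.monoLift_comp i _ hw
  have hir : i ≫ r = 𝟙 M := by
    rw [← cancel_mono i, Category.assoc, hr]
    simp [cokernel.condition_assoc]
  constructor
  intro f g sq
  have hie : i ≫ (𝟙 N - r ≫ i) = 0 := by simp [reassoc_of% hir]
  let t : cokernel i ⟶ N := cokernel.desc i _ hie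
  have ht : cokernel.π i ≫ t = 𝟙 N - r ≫ i := cokernel.π_desc _ _ _
  let u : cokernel i ⟶ X := Projective.factorThru (t ≫ g) p
  have hu : u ≫ p = t ≫ g := Projective.factorThru_comp _ _
  refine ⟨⟨⟨r ≫ f + cokernel.π i ≫ u, ?_, ?_⟩⟩⟩
  · rw [Preadditive.comp_add, reassoc_of% hir, cokernel.condition_assoc]
    simp
  · rw [Preadditive.add_comp, Category.assoc, Category.assoc, hu, sq.w,
      reassoc_of% ht]
    simp [Preadditive.sub_comp]

end Statement6Aux


open Statement6Aux in
theorem statement_6 {M N : Cx R} (i : M ⟶ N) :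
    ((∀ {X Y : Cx R} (p : X ⟶ Y), (∀ n : ℤ, Function.Surjective (p.f n)) →
        HasLiftingProperty i p) ↔
      ((∀ n : ℤ, Function.Injective (i.f n)) ∧ Projective (cokernel i))) ∧
    ((∀ {X Y : Cx R} (p : X ⟶ Y), (∀ n : ℤ, Function.Surjective (p.f n)) →
        HasLiftingProperty i p) →
      (QuasiIso i ∧ Cofib R i)) := by
  have main : (∀ {X Y : Cx R} (p : X ⟶ Y), (∀ n : ℤ, Function.Surjective (p.f n)) →
        HasLiftingProperty i p) ↔
      ((∀ n : ℤ, Function.Injective (i.f n)) ∧ Projective (cokernel i)) := by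
    constructor
    · intro hLLP
      obtain ⟨r, hir⟩ := Statement6Aux.exists_retraction i @hLLP
      constructor
      · intro n
        have h1 : i.f n ≫ r.f n = 𝟙 _ := by
          have := congrArg (fun φ => HomologicalComplex.Hom.f φ n) hir
          simpa using this
        haveI : IsSplitMono (i.f n) := ⟨⟨⟨r.f n, h1⟩⟩⟩
        exact (ModuleCat.mono_iff_injective _).1 inferInstance
      · constructor
        intro E X f e he
        have hsurj : ∀ n, Function.Surjective (e.f n) := fun n =>
          (ModuleCat.epi_iff_surjective _).1 inferInstance
        have sq : CommSq (0 : M ⟶ E) i e (cokernel.π i ≫ f) := ⟨by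
          simp [cokernel.condition_assoc]⟩
        obtain ⟨l⟩ := ((hLLP e hsurj).sq_hasLift sq).exists_lift
        refine ⟨cokernel.desc i l.l l.fac_left, ?_⟩
        rw [← cancel_epi (cokernel.π i), cokernel.π_desc_assoc]
        exact l.fac_right
    · rintro ⟨h1, h2⟩ X Y p hp
      exact Statement6Aux.hasLift i h1 h2 p hp
  refine ⟨main, fun hLLP => ?_⟩
  obtain ⟨hinj, hproj⟩ := main.1 @hLLP
  obtain ⟨r, hir⟩ := Statement6Aux.exists_retraction i @hLLP
  have hie : i ≫ (𝟙 N - r ≫ i) = 0 := by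
    simp [Preadditive.comp_sub, reassoc_of% hir]
  have ht : cokernel.π i ≫ cokernel.desc i _ hie = 𝟙 N - r ≫ i := cokernel.π_desc _ _ _
  have hz : ∀ n : ℤ, HomologicalComplex.homologyMap (𝟙 N - r ≫ i) n = 0 := fun n => by
    rw [← ht]
    exact Statement6Aux.homologyMap_through_projective_eq_zero hproj _ _ n
  refine ⟨⟨fun n => ?_⟩, fun p hp _ => hLLP p hp⟩
  rw [quasiIsoAt_iff_isIso_homologyMap]
  refine ⟨⟨HomologicalComplex.homologyMap r n, ?_, ?_⟩⟩
  · rw [← HomologicalComplex.homologyMap_comp, hir, HomologicalComplex.homologyMap_id]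
  · have e1 : r ≫ i = 𝟙 N - (𝟙 N - r ≫ i) := by abel
    rw [← HomologicalComplex.homologyMap_comp, e1,
      show HomologicalComplex.homologyMap (𝟙 N - (𝟙 N - r ≫ i)) n =
          HomologicalComplex.homologyMap (𝟙 N) n -
            HomologicalComplex.homologyMap (𝟙 N - r ≫ i) n from
        Functor.map_sub (HomologicalComplex.homologyFunctor _ _ n),
      hz n, HomologicalComplex.homologyMap_id, sub_zero]

end
end
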